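/- Let C be a monoidal category satisfying conditions (I), (II) and (III), i.e. C is right rigid, Krull–Schmidt, and C(𝟙,𝟙) is a field. Then the following are equivalent: (i) C has precisely one tensor ideal other than the zero ideal and C itself; (ii) there exists an indecomposable object X ≇ 𝟙 such that C(𝟙,X) is a nonzero simple left C(X,X)-module and C(𝟙,Y) = 0 for every indecomposable Y not isomorphic to 𝟙 or X. -/
import Mathlib


open CategoryTheory CategoryTheory.Limits CategoryTheory.MonoidalCategory

namespace TIP

attribute [local instance] CategoryTheory.Limits.hasBinaryBiproducts_of_finite_biproducts

universe v u v₂ u₂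

section DirectSummand

variable {C : Type u} [Category.{v} C]

/-- `X` is a direct summand of `Y` (i.e. `X` is a retract of `Y`). -/
def IsDirectSummand (X Y : C) : Prop := ∃ (i : X ⟶ Y) (r : Y ⟶ X), i ≫ r = 𝟙 X

end DirectSummand

section Submod

variable {C : Type u} [Category.{v} C] [Preadditive C]

/-- A subfunctor (submodule) of the representable module `P_Z = C(Z, -)`. -/
structure Submod (Z : C) where
  carrier : ∀ X : C, AddSubgroup (Z ⟶ X)
  map_mem : ∀ {X Y : C} (f : X ⟶ Y) {φ : Z ⟶ X}, φ ∈ carrier X → φ ≫ f ∈ carrier Y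

theorem Submod.ext' {Z : C} {M N : Submod Z} (h : M.carrier = N.carrier) : M = N := by
  cases M; cases N; cases h; rfl

instance {Z : C} : PartialOrder (Submod Z) where
  le M N := ∀ X : C, M.carrier X ≤ N.carrier X
  le_refl M X := le_rfl
  le_trans M N P h h' X := (h X).trans (h' X)
  le_antisymm M N h h' := Submod.ext' (funext fun X => le_antisymm (h X) (h' X))

/-- Post-composition with a fixed morphism, as an additive map. -/
def postcompHom (Z : C) {X Y : C} (f : X ⟶ Y) : (Z ⟶ X) →+ (Z ⟶ Y) where
  toFun g := g ≫ f
  map_zero' := Limits.zero_comp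
  map_add' a b := Preadditive.add_comp _ _ _ _ _ _

/-- The trace submodule `Tr_S P_Z` of the representable module `P_Z`, for a class
of objects `S`. -/
def traceSub (Z : C) (S : Set C) : Submod Z where
  carrier Y := AddSubgroup.closure {h : Z ⟶ Y | ∃ W ∈ S, ∃ (b : Z ⟶ W) (a : W ⟶ Y), h = b ≫ a}
  map_mem := by
    intro X Y f φ hφ
    have h1 : postcompHom Z f φ ∈ (AddSubgroup.closure
        {h : Z ⟶ X | ∃ W ∈ S, ∃ (b : Z ⟶ W) (a : W ⟶ X), h = b ≫ a}).map (postcompHom Z f) :=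
      AddSubgroup.mem_map_of_mem _ hφ
    rw [AddMonoidHom.map_closure] at h1
    refine AddSubgroup.closure_mono ?_ h1
    rintro x ⟨h, ⟨W, hW, b, a, rfl⟩, rfl⟩
    exact ⟨W, hW, b, a ≫ f, by simp [postcompHom]⟩

/-- The action of the endomorphism ring `C(X,X)` on `C(Z,X)` by post-composition. -/
instance endSMul {Z X : C} : SMul (End X) (Z ⟶ X) := ⟨fun e φ => φ ≫ e⟩

theorem end_smul_def {Z X : C} (e : End X) (φ : Z ⟶ X) : e • φ = φ ≫ e := rfl

/-- `C(Z,X)` is a left module over the endomorphism ring `C(X,X)`. -/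
instance endModule {Z X : C} : Module (End X) (Z ⟶ X) where
  one_smul φ := by simp [end_smul_def, End.one_def]
  mul_smul e f φ := by simp [end_smul_def, End.mul_def]
  smul_zero e := by simp [end_smul_def]
  smul_add e φ ψ := Preadditive.add_comp _ _ _ _ _ _
  add_smul e f φ := Preadditive.comp_add _ _ _ _ _ _
  zero_smul φ := by simp [end_smul_def]

end Submod

section KS

variable {C : Type u} [Category.{v} C] [Preadditive C] [HasBinaryBiproducts C]

/-- An object of an additive category is indecomposable if it is nonzero and
any decomposition as a biproduct has a zero summand. -/
def Indecomposable (X : C) : Prop :=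
  ¬ IsZero X ∧ ∀ Y Z : C, Nonempty (X ≅ Y ⊞ Z) → IsZero Y ∨ IsZero Z

end KS

section KS2

variable (C : Type u) [Category.{v} C] [Preadditive C] [HasFiniteBiproducts C]

/-- A Krull-Schmidt category: every object is a finite biproduct of indecomposable
objects, and indecomposable objects have local endomorphism rings. -/
structure IsKrullSchmidt : Prop where
  local_end : ∀ X : C, Indecomposable X → IsLocalRing (End X)
  decomp : ∀ X : C, ∃ (n : ℕ) (f : Fin n → C),
    (∀ i, Indecomposable (f i)) ∧ Nonempty (X ≅ ⨁ f)

end KS2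

section Monoidal

variable {C : Type u} [Category.{v} C] [MonoidalCategory C]

/-- A right dual `(X^∨, ev_X, co_X)` of an object `X`, with
`ev_X : X ⊗ X^∨ ⟶ 𝟙` and `co_X : 𝟙 ⟶ X^∨ ⊗ X` satisfying the zigzag identities. -/
structure RightDual (X : C) where
  dual : C
  ev : X ⊗ dual ⟶ 𝟙_ C
  coev : 𝟙_ C ⟶ dual ⊗ X
  zigzag₁ : (ρ_ X).inv ≫ (X ◁ coev) ≫ (α_ X dual X).inv ≫ (ev ▷ X) ≫ (λ_ X).hom = 𝟙 X
  zigzag₂ : (λ_ dual).inv ≫ (coev ▷ dual) ≫ (α_ dual X dual).hom ≫ (dual ◁ ev) ≫ (ρ_ dual).hom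
      = 𝟙 dual

/-- The map `ι_{XY} : C(𝟙, X^∨ ⊗ Y) → C(X, Y)`, `φ ↦ (ev_X ⊗ 1_Y) ∘ (1_X ⊗ φ)`,
defined in terms of the raw data of a dual object and an evaluation morphism. -/
def iotaRaw {X : C} (Xd : C) (ev : X ⊗ Xd ⟶ 𝟙_ C) {Y : C} (φ : 𝟙_ C ⟶ Xd ⊗ Y) : X ⟶ Y :=
  (ρ_ X).inv ≫ (X ◁ φ) ≫ (α_ X Xd Y).inv ≫ (ev ▷ Y) ≫ (λ_ Y).hom

/-- The isomorphism `ι_{XY} : C(𝟙, X^∨ ⊗ Y) → C(X, Y)`, `φ ↦ (ev_X ⊗ 1_Y) ∘ (1_X ⊗ φ)`. -/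
def iota {X : C} (D : RightDual X) {Y : C} (φ : 𝟙_ C ⟶ D.dual ⊗ Y) : X ⟶ Y :=
  iotaRaw D.dual D.ev φ

/-- The inverse of `ι_{XY}`, given by `f ↦ (1_{X^∨} ⊗ f) ∘ co_X`. -/
def iotaInv {X : C} (D : RightDual X) {Y : C} (f : X ⟶ Y) : 𝟙_ C ⟶ D.dual ⊗ Y :=
  D.coev ≫ (D.dual ◁ f)

end Monoidal

section TId

variable (C : Type u) [Category.{v} C] [Preadditive C] [MonoidalCategory C]

/-- A left-tensor ideal in a preadditive monoidal category. -/
structure TensorIdeal where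
  carrier : ∀ X Y : C, AddSubgroup (X ⟶ Y)
  comp_pre : ∀ {W X Y : C} (g : W ⟶ X) {f : X ⟶ Y}, f ∈ carrier X Y → g ≫ f ∈ carrier W Y
  comp_post : ∀ {X Y Z : C} {f : X ⟶ Y} (h : Y ⟶ Z), f ∈ carrier X Y → f ≫ h ∈ carrier X Z
  whisker_mem : ∀ (Z : C) {X Y : C} {f : X ⟶ Y}, f ∈ carrier X Y →
    Z ◁ f ∈ carrier (Z ⊗ X) (Z ⊗ Y)

variable {C}

theorem TensorIdeal.ext' {J K : TensorIdeal C} (h : J.carrier = K.carrier) : J = K := by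
  cases J; cases K; cases h; rfl

instance : PartialOrder (TensorIdeal C) where
  le J K := ∀ X Y : C, J.carrier X Y ≤ K.carrier X Y
  le_refl J X Y := le_rfl
  le_trans J K L h h' X Y := (h X Y).trans (h' X Y)
  le_antisymm J K h h' :=
    TensorIdeal.ext' (funext fun X => funext fun Y => le_antisymm (h X Y) (h' X Y))

variable (C)

/-- The tensor ideal of all morphisms. -/
def TensorIdeal.top : TensorIdeal C where
  carrier _ _ := ⊤
  comp_pre := by intros; exact AddSubgroup.mem_top _
  comp_post := by intros; exact AddSubgroup.mem_top _
  whisker_mem := by intros; exact AddSubgroup.mem_top _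

variable {C}

/-- `Ψ` maps a tensor ideal `J` to the subfunctor `J(𝟙, -)` of the principal module
`P_𝟙 = C(𝟙, -)`. -/
def Psi (J : TensorIdeal C) : Submod (𝟙_ C) where
  carrier X := J.carrier (𝟙_ C) X
  map_mem := by intro X Y f φ hφ; exact J.comp_post f hφ

variable (C) [MonoidalPreadditive C]

/-- The zero tensor ideal. -/
def TensorIdeal.bot : TensorIdeal C where
  carrier _ _ := ⊥
  comp_pre := by
    intro W X Y g f hf
    rw [AddSubgroup.mem_bot] at *
    rw [hf, Limits.comp_zero]
  comp_post := by
    intro X Y Z f h hf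
    rw [AddSubgroup.mem_bot] at *
    rw [hf, Limits.zero_comp]
  whisker_mem := by
    intro Z X Y f hf
    rw [AddSubgroup.mem_bot] at *
    rw [hf, MonoidalPreadditive.whiskerLeft_zero]

end TId

section Thick

variable (C : Type u) [Category.{v} C] [Preadditive C] [MonoidalCategory C]
  [HasBinaryBiproducts C]

/-- A thick left-tensor Ob-ideal: an isomorphism closed class of objects, closed under
direct sums, direct summands, and tensoring on the left by arbitrary objects. -/
structure ThickIdeal where
  carrier : Set C
  iso_mem : ∀ {X Y : C}, (X ≅ Y) → X ∈ carrier → Y ∈ carrier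
  biprod_mem_iff : ∀ X Y : C, ((X ⊞ Y) ∈ carrier ↔ (X ∈ carrier ∧ Y ∈ carrier))
  tensor_mem : ∀ (Y : C) {X : C}, X ∈ carrier → (Y ⊗ X) ∈ carrier

variable {C}

theorem ThickIdeal.ext' {I I' : ThickIdeal C} (h : I.carrier = I'.carrier) : I = I' := by
  cases I; cases I'; cases h; rfl

instance : PartialOrder (ThickIdeal C) where
  le I I' := I.carrier ⊆ I'.carrier
  le_refl I := Set.Subset.refl _
  le_trans I I' I'' h h' := Set.Subset.trans h h'
  le_antisymm I I' h h' := ThickIdeal.ext' (le_antisymm h h')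

/-- The decategorification map `Ob`, sending a tensor ideal `J` to the thick
left-tensor Ob-ideal of objects `X` with `1_X ∈ J(X,X)`. -/
def obIdeal (J : TensorIdeal C) : ThickIdeal C where
  carrier := {X : C | 𝟙 X ∈ J.carrier X X}
  iso_mem := by
    intro X Y e hX
    have h := J.comp_pre e.inv (J.comp_post e.hom hX)
    simpa using h
  biprod_mem_iff := by
    intro X Y
    constructor
    · intro h
      constructor
      · have h1 := J.comp_pre (biprod.inl : X ⟶ X ⊞ Y) (J.comp_post (biprod.fst : X ⊞ Y ⟶ X) h)
        simpa using h1
      · have h1 := J.comp_pre (biprod.inr : Y ⟶ X ⊞ Y) (J.comp_post (biprod.snd : X ⊞ Y ⟶ Y) h)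
        simpa using h1
    · rintro ⟨hX, hY⟩
      have h1 := J.comp_pre (biprod.fst : X ⊞ Y ⟶ X) (J.comp_post (biprod.inl : X ⟶ X ⊞ Y) hX)
      have h2 := J.comp_pre (biprod.snd : X ⊞ Y ⟶ Y) (J.comp_post (biprod.inr : Y ⟶ X ⊞ Y) hY)
      simp only [Category.id_comp] at h1 h2
      have h3 := AddSubgroup.add_mem _ h1 h2
      rw [biprod.total] at h3
      exact h3
  tensor_mem := by
    intro Y X hX
    have h := J.whisker_mem Y hX
    simpa using h

end Thick

section Braided

variable {C : Type u} [Category.{v} C] [MonoidalCategory C] [BraidedCategory C]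

/-- The trace of an endomorphism, with respect to a choice of right duals. -/
def traceMor (D : ∀ X : C, RightDual X) {X : C} (f : X ⟶ X) : 𝟙_ C ⟶ 𝟙_ C :=
  (D X).coev ≫ ((D X).dual ◁ f) ≫ (β_ (D X).dual X).hom ≫ (D X).ev

end Braided


section Proof

open MonoidalCategory

variable {C : Type u} [Category.{v} C] [Preadditive C] [MonoidalCategory C]

/-- Push a closure membership through an additive map into a subgroup. -/
theorem mem_of_closure_map {A B : Type*} [AddGroup A] [AddGroup B] (f : A →+ B)
    (T : AddSubgroup B) {s : Set A} (hst : ∀ a ∈ s, f a ∈ T) {x : A}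
    (hx : x ∈ AddSubgroup.closure s) : f x ∈ T := by
  have h1 : f x ∈ (AddSubgroup.closure s).map f := AddSubgroup.mem_map_of_mem _ hx
  rw [AddMonoidHom.map_closure] at h1
  refine (AddSubgroup.closure_le T).mpr ?_ h1
  rintro y ⟨a, ha, rfl⟩
  exact hst a ha

/-- Pre-composition with a fixed morphism, as an additive map. -/
def precompHom {Z X Y : C} (φ : Z ⟶ X) : (X ⟶ Y) →+ (Z ⟶ Y) where
  toFun h := φ ≫ h
  map_zero' := Limits.comp_zero
  map_add' a b := Preadditive.comp_add _ _ _ _ _ _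

variable [MonoidalPreadditive C]

/-- Left whiskering as an additive map. -/
def whiskerLeftHom (W : C) {X Y : C} : (X ⟶ Y) →+ (W ⊗ X ⟶ W ⊗ Y) where
  toFun f := W ◁ f
  map_zero' := MonoidalPreadditive.whiskerLeft_zero
  map_add' a b := by simp

/-- `ι` is a retraction of `ι⁻¹`. -/
theorem iota_iotaInv {X : C} (D : RightDual X) {Y : C} (f : X ⟶ Y) :
    iota D (iotaInv D f) = f := by
  dsimp only [iota, iotaRaw, iotaInv]
  rw [MonoidalCategory.whiskerLeft_comp]
  simp only [Category.assoc]
  slice_lhs 3 4 => rw [associator_inv_naturality_right]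
  slice_lhs 4 5 => rw [whisker_exchange]
  slice_lhs 5 6 => rw [MonoidalCategory.leftUnitor_naturality]
  slice_lhs 1 5 => rw [D.zigzag₁]
  simp

/-- Any morphism out of the unit into `Z ⊗ 𝟙` followed by a whiskered `φ` factors
through `φ`. -/
theorem unit_whisker_factor {Z U : C} (g : 𝟙_ C ⟶ Z ⊗ 𝟙_ C) (φ : 𝟙_ C ⟶ U) :
    (g ≫ (Z ◁ φ)) = φ ≫ ((λ_ U).inv ≫ ((g ≫ (ρ_ Z).hom) ▷ U)) := by
  conv_lhs => rw [show g = (g ≫ (ρ_ Z).hom) ≫ (ρ_ Z).inv by simp]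
  calc ((g ≫ (ρ_ Z).hom) ≫ (ρ_ Z).inv) ≫ (Z ◁ φ)
      = (ρ_ (𝟙_ C)).inv ≫ ((g ≫ (ρ_ Z).hom) ▷ 𝟙_ C) ≫ (Z ◁ φ) := by
        rw [MonoidalCategory.rightUnitor_inv_naturality, Category.assoc]
    _ = (ρ_ (𝟙_ C)).inv ≫ (𝟙_ C ◁ φ) ≫ ((g ≫ (ρ_ Z).hom) ▷ U) := by
        rw [← whisker_exchange]
    _ = (λ_ (𝟙_ C)).inv ≫ (𝟙_ C ◁ φ) ≫ ((g ≫ (ρ_ Z).hom) ▷ U) := by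
        rw [unitors_inv_equal]
    _ = φ ≫ (λ_ U).inv ≫ ((g ≫ (ρ_ Z).hom) ▷ U) := by
        rw [← MonoidalCategory.leftUnitor_inv_naturality_assoc]

/-- The generating set of the tensor ideal generated by a submodule of `P_𝟙`. -/
def genSet (M : Submod (𝟙_ C)) (X Y : C) : Set (X ⟶ Y) :=
  {f | ∃ (Z U : C) (φ : 𝟙_ C ⟶ U), φ ∈ M.carrier U ∧
    ∃ (g : X ⟶ Z ⊗ 𝟙_ C) (h : Z ⊗ U ⟶ Y), f = (g ≫ (Z ◁ φ)) ≫ h}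

/-- The tensor ideal generated by a submodule of `P_𝟙`. -/
def genIdeal (M : Submod (𝟙_ C)) : TensorIdeal C where
  carrier X Y := AddSubgroup.closure (genSet M X Y)
  comp_pre := by
    intro W X Y g f hf
    refine mem_of_closure_map (precompHom g) _ ?_ hf
    rintro a ⟨Z, U, φ, hφ, g', h, rfl⟩
    exact AddSubgroup.subset_closure
      ⟨Z, U, φ, hφ, g ≫ g', h, by simp [precompHom, Category.assoc]⟩
  comp_post := by
    intro X Y Y' f h hf
    refine mem_of_closure_map (postcompHom X h) _ ?_ hf
    rintro a ⟨Z, U, φ, hφ, g', h', rfl⟩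
    exact AddSubgroup.subset_closure
      ⟨Z, U, φ, hφ, g', h' ≫ h, by simp [postcompHom, Category.assoc]⟩
  whisker_mem := by
    intro W X Y f hf
    refine mem_of_closure_map (whiskerLeftHom W) _ ?_ hf
    rintro a ⟨Z, U, φ, hφ, g, h, rfl⟩
    refine AddSubgroup.subset_closure
      ⟨W ⊗ Z, U, φ, hφ, (W ◁ g) ≫ (α_ W Z (𝟙_ C)).inv,
        (α_ W Z U).hom ≫ (W ◁ h), ?_⟩
    dsimp [whiskerLeftHom]
    simp only [MonoidalCategory.whiskerLeft_comp, Category.assoc,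
      tensor_whiskerLeft_symm]

theorem Psi_genIdeal (M : Submod (𝟙_ C)) : Psi (genIdeal M) = M := by
  refine Submod.ext' (funext fun Y => le_antisymm ?_ ?_)
  · show AddSubgroup.closure (genSet M (𝟙_ C) Y) ≤ M.carrier Y
    rw [AddSubgroup.closure_le]
    rintro f ⟨Z, U, φ, hφ, g, h, rfl⟩
    rw [unit_whisker_factor, Category.assoc]
    exact M.map_mem _ hφ
  · intro φ hφ
    show φ ∈ AddSubgroup.closure (genSet M (𝟙_ C) Y)
    refine AddSubgroup.subset_closure
      ⟨𝟙_ C, Y, φ, hφ, (λ_ (𝟙_ C)).inv, (λ_ Y).hom, ?_⟩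
    rw [Category.assoc, MonoidalCategory.leftUnitor_naturality]
    simp

theorem TensorIdeal.mem_iff_iotaInv_mem (J : TensorIdeal C) {X Y : C} (D : RightDual X)
    (f : X ⟶ Y) :
    f ∈ J.carrier X Y ↔ iotaInv D f ∈ J.carrier (𝟙_ C) (D.dual ⊗ Y) := by
  constructor
  · intro hf
    exact J.comp_pre D.coev (J.whisker_mem D.dual hf)
  · intro hf
    have h2 : iota D (iotaInv D f) ∈ J.carrier X Y :=
      J.comp_pre (ρ_ X).inv (J.comp_post
        ((α_ X D.dual Y).inv ≫ (D.ev ▷ Y) ≫ (λ_ Y).hom) (J.whisker_mem X hf))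
    rwa [iota_iotaInv] at h2

theorem Psi_injective (hrigid : ∀ X : C, Nonempty (RightDual X)) :
    Function.Injective (Psi (C := C)) := by
  intro J K h
  refine TensorIdeal.ext' (funext fun X => funext fun Y => ?_)
  ext f
  obtain ⟨D⟩ := hrigid X
  rw [J.mem_iff_iotaInv_mem D, K.mem_iff_iotaInv_mem D]
  have h' : (Psi J).carrier (D.dual ⊗ Y) = (Psi K).carrier (D.dual ⊗ Y) := by rw [h]
  show iotaInv D f ∈ (Psi J).carrier (D.dual ⊗ Y) ↔ iotaInv D f ∈ (Psi K).carrier (D.dual ⊗ Y)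
  rw [h']

/-- The zero submodule of `P_𝟙`. -/
def Submod.zero (Z : C) : Submod Z where
  carrier _ := ⊥
  map_mem := by
    intro X Y f φ hφ
    rw [AddSubgroup.mem_bot] at *
    rw [hφ, Limits.zero_comp]

/-- The full submodule of `P_𝟙`. -/
def Submod.full (Z : C) : Submod Z where
  carrier _ := ⊤
  map_mem := by intros; exact AddSubgroup.mem_top _

theorem Psi_bot : Psi (TensorIdeal.bot C) = Submod.zero (𝟙_ C) :=
  Submod.ext' rfl

theorem Psi_top : Psi (TensorIdeal.top C) = Submod.full (𝟙_ C) :=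
  Submod.ext' rfl

/-- Transfer of the unique-proper-ideal condition through the bijection `Ψ`. -/
theorem unique_tensorIdeal_iff_unique_submod (hrigid : ∀ X : C, Nonempty (RightDual X)) :
    (∃! J : TensorIdeal C, J ≠ TensorIdeal.bot C ∧ J ≠ TensorIdeal.top C) ↔
      (∃! M : Submod (𝟙_ C), M ≠ Submod.zero (𝟙_ C) ∧ M ≠ Submod.full (𝟙_ C)) := by
  have hinj := Psi_injective hrigid
  constructor
  · rintro ⟨J, ⟨hb, ht⟩, hu⟩
    refine ⟨Psi J, ⟨fun h => hb (hinj (h.trans Psi_bot.symm)),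
      fun h => ht (hinj (h.trans Psi_top.symm))⟩, ?_⟩
    rintro M ⟨hb', ht'⟩
    have h1 : genIdeal M = J := by
      refine hu _ ⟨fun h => hb' ?_, fun h => ht' ?_⟩
      · rw [← Psi_genIdeal M, h, Psi_bot]
      · rw [← Psi_genIdeal M, h, Psi_top]
    rw [← h1, Psi_genIdeal]
  · rintro ⟨M, ⟨hb, ht⟩, hu⟩
    refine ⟨genIdeal M, ⟨?_, ?_⟩, ?_⟩
    · intro h
      exact hb (by rw [← Psi_genIdeal M, h, Psi_bot])
    · intro h
      exact ht (by rw [← Psi_genIdeal M, h, Psi_top])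
    · rintro J ⟨hb', ht'⟩
      have h1 : Psi J = M := by
        refine hu _ ⟨fun h => hb' ?_, fun h => ht' ?_⟩
        · exact hinj (h.trans Psi_bot.symm)
        · exact hinj (h.trans Psi_top.symm)
      exact hinj (by rw [h1, Psi_genIdeal])

/-! ### Step B: the module-theoretic side -/

/-- In a local ring, idempotents are `0` or `1`. -/
theorem idem_zero_or_one {R : Type*} [Ring R] (hR : IsLocalRing R) {e : R}
    (he : e * e = e) : e = 0 ∨ e = 1 := by
  haveI := hR
  rcases IsLocalRing.isUnit_or_isUnit_of_add_one
      (a := e) (b := 1 - e) (by abel) with h | h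
  · right
    rcases h with ⟨u, rfl⟩
    have h1 : (u : R) * ((u : R) * (↑u⁻¹ : R)) = (u : R) * (↑u⁻¹ : R) := by
      rw [← mul_assoc, he]
    rw [Units.mul_inv] at h1
    simpa using h1
  · left
    rcases h with ⟨u, hu⟩
    have h2 : e * (1 - e) = 0 := by rw [mul_sub, mul_one, he, sub_self]
    have h3 : e * ((1 - e) * (↑u⁻¹ : R)) = 0 := by rw [← mul_assoc, h2, zero_mul]
    rwa [← hu, Units.mul_inv, mul_one] at h3

theorem one_ne_zero_of_isField (hK : IsField (End (𝟙_ C))) :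
    (𝟙 (𝟙_ C) : 𝟙_ C ⟶ 𝟙_ C) ≠ 0 := by
  haveI : Nontrivial (End (𝟙_ C)) := ⟨hK.exists_pair_ne⟩
  have : (1 : End (𝟙_ C)) ≠ 0 := one_ne_zero
  simpa [End.one_def] using this

/-- If `X` is not isomorphic to the unit and has local endomorphism ring, then any
composite `𝟙 ⟶ X ⟶ 𝟙` vanishes. -/
theorem comp_unit_eq_zero (hK : IsField (End (𝟙_ C))) {X : C}
    (hloc : IsLocalRing (End X)) (hX1 : ¬ Nonempty (X ≅ 𝟙_ C))
    (ψ : 𝟙_ C ⟶ X) (h : X ⟶ 𝟙_ C) : ψ ≫ h = 0 := by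
  by_contra hc
  have hc' : (ψ ≫ h : End (𝟙_ C)) ≠ 0 := hc
  obtain ⟨d, hd⟩ := hK.mul_inv_cancel hc'
  rw [End.mul_def] at hd
  -- hd : d ≫ ψ ≫ h = 1
  set i : 𝟙_ C ⟶ X := d ≫ ψ with hi
  have hir : i ≫ h = 𝟙 (𝟙_ C) := by
    rw [hi, Category.assoc]
    exact hd.trans End.one_def
  set e : End X := h ≫ i with he
  have hee : e * e = e := by
    rw [End.mul_def, he]
    calc (h ≫ i) ≫ (h ≫ i) = h ≫ (i ≫ h) ≫ i := by simp only [Category.assoc]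
    _ = h ≫ i := by rw [hir, Category.id_comp]
  rcases idem_zero_or_one hloc hee with h0 | h1
  · have h2 : 𝟙 (𝟙_ C) = 0 := by
      calc 𝟙 (𝟙_ C) = (i ≫ h) ≫ (i ≫ h) := by rw [hir]; simp
      _ = i ≫ (h ≫ i) ≫ h := by simp only [Category.assoc]
      _ = 0 := by rw [he.symm.trans h0]; simp
    exact one_ne_zero_of_isField hK h2
  · exact hX1 ⟨⟨h, i, (he.symm.trans h1).trans End.one_def, hir⟩⟩

/-- A retract of an object with local endomorphism ring is zero or gives an
isomorphism. -/
theorem iso_of_retract {X Y : C} (hloc : IsLocalRing (End X)) (hY : 𝟙 Y ≠ 0)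
    (i : Y ⟶ X) (r : X ⟶ Y) (hir : i ≫ r = 𝟙 Y) : Nonempty (Y ≅ X) := by
  set e : End X := r ≫ i with he
  have hee : e * e = e := by
    rw [End.mul_def, he]
    calc (r ≫ i) ≫ (r ≫ i) = r ≫ (i ≫ r) ≫ i := by simp only [Category.assoc]
    _ = r ≫ i := by rw [hir, Category.id_comp]
  rcases idem_zero_or_one hloc hee with h0 | h1
  · exfalso
    apply hY
    calc 𝟙 Y = (i ≫ r) ≫ (i ≫ r) := by rw [hir]; simp
    _ = i ≫ (r ≫ i) ≫ r := by simp only [Category.assoc]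
    _ = 0 := by rw [he.symm.trans h0]; simp
  · exact ⟨⟨i, r, hir, (he.symm.trans h1).trans End.one_def⟩⟩

/-- The subgroup `M(X)` as a `End X`-submodule of `C(𝟙, X)`. -/
def toSubmodule (M : Submod (𝟙_ C)) (X : C) : Submodule (End X) (𝟙_ C ⟶ X) where
  carrier := M.carrier X
  add_mem' := fun ha hb => (M.carrier X).add_mem ha hb
  zero_mem' := (M.carrier X).zero_mem
  smul_mem' := fun e φ hφ => M.map_mem e hφ

/-- The submodule of `P_𝟙` generated by an `End X`-submodule of `C(𝟙,X)`. -/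
def ofSubmodule (X : C) (N : Submodule (End X) (𝟙_ C ⟶ X)) : Submod (𝟙_ C) where
  carrier W := AddSubgroup.closure {f | ∃ ψ ∈ N, ∃ h : X ⟶ W, f = ψ ≫ h}
  map_mem := by
    intro W W' f φ hφ
    refine mem_of_closure_map (postcompHom (𝟙_ C) f) _ ?_ hφ
    rintro a ⟨ψ, hψ, h, rfl⟩
    exact AddSubgroup.subset_closure ⟨ψ, hψ, h ≫ f, by simp [postcompHom, Category.assoc]⟩

theorem ofSubmodule_carrier_self (X : C) (N : Submodule (End X) (𝟙_ C ⟶ X)) (f : 𝟙_ C ⟶ X) :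
    f ∈ (ofSubmodule X N).carrier X ↔ f ∈ N := by
  constructor
  · intro hf
    refine mem_of_closure_map (AddMonoidHom.id _) N.toAddSubgroup ?_ hf
    rintro a ⟨ψ, hψ, h, rfl⟩
    exact N.smul_mem (h : End X) hψ
  · intro hf
    exact AddSubgroup.subset_closure ⟨f, hf, 𝟙 X, by simp⟩

/-- The cyclic submodule of `P_𝟙` generated by `φ : 𝟙 ⟶ Y`. -/
def cyc {Y : C} (φ : 𝟙_ C ⟶ Y) : Submod (𝟙_ C) where
  carrier W := (precompHom (Y := W) φ).range
  map_mem := by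
    rintro W W' f ψ ⟨h, hh⟩
    exact ⟨h ≫ f, by simp [precompHom] at hh ⊢; rw [← hh]; simp⟩

theorem mem_cyc {Y W : C} (φ : 𝟙_ C ⟶ Y) (f : 𝟙_ C ⟶ W) :
    f ∈ (cyc φ).carrier W ↔ ∃ h : Y ⟶ W, φ ≫ h = f := Iff.rfl

theorem self_mem_cyc {Y : C} (φ : 𝟙_ C ⟶ Y) : φ ∈ (cyc φ).carrier Y :=
  ⟨𝟙 Y, Category.comp_id φ⟩

theorem Submod.eq_full_iff_id_mem (M : Submod (𝟙_ C)) :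
    M = Submod.full (𝟙_ C) ↔ 𝟙 (𝟙_ C) ∈ M.carrier (𝟙_ C) := by
  constructor
  · rintro rfl; exact AddSubgroup.mem_top _
  · intro h
    refine Submod.ext' (funext fun W => ?_)
    refine le_antisymm le_top ?_
    intro φ _
    have := M.map_mem φ h
    rwa [Category.id_comp] at this

theorem Submod.ne_zero_iff (M : Submod (𝟙_ C)) :
    M ≠ Submod.zero (𝟙_ C) ↔ ∃ (W : C) (φ : 𝟙_ C ⟶ W), φ ∈ M.carrier W ∧ φ ≠ 0 := by
  constructor
  · intro h
    by_contra hc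
    push_neg at hc
    apply h
    refine Submod.ext' (funext fun W => ?_)
    show M.carrier W = ⊥
    refine le_antisymm ?_ bot_le
    intro φ hφ
    rw [AddSubgroup.mem_bot]
    exact hc W φ hφ
  · rintro ⟨W, φ, hφ, h0⟩ rfl
    apply h0
    have h1 : φ ∈ (⊥ : AddSubgroup (𝟙_ C ⟶ W)) := hφ
    rwa [AddSubgroup.mem_bot] at h1

theorem Submod.eq_full_of_unit_mem (hK : IsField (End (𝟙_ C))) (M : Submod (𝟙_ C))
    {c : 𝟙_ C ⟶ 𝟙_ C} (hc : c ∈ M.carrier (𝟙_ C)) (hc0 : c ≠ 0) :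
    M = Submod.full (𝟙_ C) := by
  rw [Submod.eq_full_iff_id_mem]
  obtain ⟨d, hd⟩ := hK.mul_inv_cancel (a := c) hc0
  have h2 := (hK.mul_comm d c).trans hd
  rw [End.mul_def] at h2
  have h3 : c ≫ d = 𝟙 (𝟙_ C) := h2.trans End.one_def
  exact h3 ▸ M.map_mem d hc

/-- In a proper submodule all morphisms to objects isomorphic to the unit vanish. -/
theorem Submod.unit_component_zero (hK : IsField (End (𝟙_ C))) {M : Submod (𝟙_ C)}
    (ht : M ≠ Submod.full (𝟙_ C)) {W : C} (e : W ≅ 𝟙_ C) {φ : 𝟙_ C ⟶ W}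
    (hφ : φ ∈ M.carrier W) : φ = 0 := by
  have h1 : φ ≫ e.hom ∈ M.carrier (𝟙_ C) := M.map_mem _ hφ
  have h2 : φ ≫ e.hom = 0 := by
    by_contra hc
    exact ht (Submod.eq_full_of_unit_mem hK M h1 hc)
  calc φ = (φ ≫ e.hom) ≫ e.inv := by simp
  _ = 0 := by rw [h2]; simp

end Proof

section ProofB

open MonoidalCategory

variable {C : Type u} [Category.{v} C] [Preadditive C] [MonoidalCategory C]
  [MonoidalPreadditive C] [HasFiniteBiproducts C]

/-- Krull-Schmidt decomposition, formulated via a family of retractions. -/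
theorem decomp_sum (hKS : IsKrullSchmidt C) (W : C) :
    ∃ (n : ℕ) (f : Fin n → C) (p : ∀ j, W ⟶ f j) (s : ∀ j, f j ⟶ W),
      (∀ j, Indecomposable (f j)) ∧ (∑ j, p j ≫ s j) = 𝟙 W := by
  obtain ⟨n, f, hind, ⟨e⟩⟩ := hKS.decomp W
  refine ⟨n, f, fun j => e.hom ≫ biproduct.π f j, fun j => biproduct.ι f j ≫ e.inv, hind, ?_⟩
  calc (∑ j, (e.hom ≫ biproduct.π f j) ≫ (biproduct.ι f j ≫ e.inv))
      = ∑ j, e.hom ≫ ((biproduct.π f j ≫ biproduct.ι f j) ≫ e.inv) :=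
        Finset.sum_congr rfl (fun j _ => by simp [Category.assoc])
    _ = e.hom ≫ ∑ j, ((biproduct.π f j ≫ biproduct.ι f j) ≫ e.inv) := by
        rw [Preadditive.comp_sum]
    _ = e.hom ≫ (∑ j, biproduct.π f j ≫ biproduct.ι f j) ≫ e.inv := by
        rw [Preadditive.sum_comp]
    _ = 𝟙 W := by rw [biproduct.total]; simp

theorem ofSubmodule_ne_full (hK : IsField (End (𝟙_ C))) {X : C}
    (hloc : IsLocalRing (End X)) (hX1 : ¬ Nonempty (X ≅ 𝟙_ C))
    (N : Submodule (End X) (𝟙_ C ⟶ X)) :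
    ofSubmodule X N ≠ Submod.full (𝟙_ C) := by
  intro h
  have h1 : 𝟙 (𝟙_ C) ∈ (ofSubmodule X N).carrier (𝟙_ C) :=
    ((ofSubmodule X N).eq_full_iff_id_mem).mp h
  have h2 : 𝟙 (𝟙_ C) = 0 := by
    have h3 := mem_of_closure_map (AddMonoidHom.id _)
      (⊥ : AddSubgroup (𝟙_ C ⟶ 𝟙_ C)) ?_ h1
    · simpa using h3
    · rintro a ⟨ψ, hψ, hh, rfl⟩
      simpa [AddSubgroup.mem_bot] using comp_unit_eq_zero hK hloc hX1 ψ hh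
  exact one_ne_zero_of_isField hK h2

theorem cyc_ne_full (hK : IsField (End (𝟙_ C))) {Y : C}
    (hloc : IsLocalRing (End Y)) (hY1 : ¬ Nonempty (Y ≅ 𝟙_ C)) (φ : 𝟙_ C ⟶ Y) :
    cyc φ ≠ Submod.full (𝟙_ C) := by
  intro h
  obtain ⟨hh, hhh⟩ := ((cyc φ).eq_full_iff_id_mem).mp h
  have h1 : φ ≫ hh = 𝟙 (𝟙_ C) := hhh
  have h0 : φ ≫ hh = 0 := comp_unit_eq_zero hK hloc hY1 φ hh
  exact one_ne_zero_of_isField hK (h1.symm.trans h0)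

/-- The central step: unique proper nonzero submodule of `P_𝟙` iff condition (ii). -/
theorem unique_submod_iff (hKS : IsKrullSchmidt C) (hK : IsField (End (𝟙_ C))) :
    (∃! M : Submod (𝟙_ C), M ≠ Submod.zero (𝟙_ C) ∧ M ≠ Submod.full (𝟙_ C)) ↔
      (∃ X : C, Indecomposable X ∧ ¬ Nonempty (X ≅ 𝟙_ C) ∧
        IsSimpleModule (End X) (𝟙_ C ⟶ X) ∧
        ∀ Y : C, Indecomposable Y → ¬ Nonempty (Y ≅ 𝟙_ C) → ¬ Nonempty (Y ≅ X) →
          ∀ φ : 𝟙_ C ⟶ Y, φ = 0) := by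
  have hcomp : ∀ (M : Submod (𝟙_ C)), M ≠ Submod.zero (𝟙_ C) →
      ∃ (V : C), Indecomposable V ∧ ∃ ψ : 𝟙_ C ⟶ V, ψ ∈ M.carrier V ∧ ψ ≠ 0 := by
    intro M hb
    obtain ⟨W, φ, hφ, h0⟩ := (M.ne_zero_iff).mp hb
    obtain ⟨n, f, p, s, hind, htot⟩ := decomp_sum hKS W
    by_contra hc
    push_neg at hc
    apply h0
    calc φ = φ ≫ 𝟙 W := by simp
    _ = φ ≫ ∑ j, p j ≫ s j := by rw [htot]
    _ = ∑ j, (φ ≫ p j) ≫ s j := by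
        rw [Preadditive.comp_sum]
        exact Finset.sum_congr rfl fun j _ => (Category.assoc _ _ _).symm
    _ = 0 := Finset.sum_eq_zero fun j _ => by
        rw [hc (f j) (hind j) (φ ≫ p j) (M.map_mem (p j) hφ), Limits.zero_comp]
  constructor
  · rintro ⟨M, ⟨hb, ht⟩, hu⟩
    obtain ⟨X, hXind, ψ₀, hψ₀M, hψ₀⟩ := hcomp M hb
    have hlocX := hKS.local_end X hXind
    have hX1 : ¬ Nonempty (X ≅ 𝟙_ C) := by
      rintro ⟨e⟩
      exact hψ₀ (Submod.unit_component_zero hK ht e hψ₀M)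
    have hN : ∀ N : Submodule (End X) (𝟙_ C ⟶ X), N ≠ ⊥ → ofSubmodule X N = M := by
      intro N hNbot
      refine hu _ ⟨?_, ofSubmodule_ne_full hK hlocX hX1 N⟩
      rw [Submod.ne_zero_iff]
      obtain ⟨χ, hχN, hχ0⟩ := Submodule.exists_mem_ne_zero_of_ne_bot hNbot
      exact ⟨X, χ, (ofSubmodule_carrier_self X N χ).mpr hχN, hχ0⟩
    have htopbot : (⊤ : Submodule (End X) (𝟙_ C ⟶ X)) ≠ ⊥ := by
      intro h
      apply hψ₀
      have h2 : ψ₀ ∈ (⊤ : Submodule (End X) (𝟙_ C ⟶ X)) := Submodule.mem_top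
      rw [h] at h2
      simpa using h2
    have hMX : ∀ χ : 𝟙_ C ⟶ X, χ ∈ M.carrier X := by
      intro χ
      have h2 : ofSubmodule X ⊤ = M := hN ⊤ htopbot
      rw [← h2]
      exact (ofSubmodule_carrier_self X ⊤ χ).mpr Submodule.mem_top
    have hsimp : IsSimpleModule (End X) (𝟙_ C ⟶ X) := by
      refine { toNontrivial := ⟨⊥, ⊤, fun h => htopbot h.symm⟩, eq_bot_or_eq_top := ?_ }
      intro N
      by_cases hNb : N = ⊥
      · exact Or.inl hNb
      · refine Or.inr ?_
        have h1 : ofSubmodule X N = M := hN N hNb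
        ext χ
        simp only [Submodule.mem_top, iff_true]
        exact (ofSubmodule_carrier_self X N χ).mp (by rw [h1]; exact hMX χ)
    refine ⟨X, hXind, hX1, hsimp, ?_⟩
    intro Y hYind hY1 hYX φ
    by_contra hφ0
    have hlocY := hKS.local_end Y hYind
    have hcycφ : cyc φ = M := hu _ ⟨(cyc φ).ne_zero_iff.mpr ⟨Y, φ, self_mem_cyc φ, hφ0⟩,
      cyc_ne_full hK hlocY hY1 φ⟩
    have hcycψ : cyc ψ₀ = M := hu _ ⟨(cyc ψ₀).ne_zero_iff.mpr ⟨X, ψ₀, self_mem_cyc ψ₀, hψ₀⟩,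
      cyc_ne_full hK hlocX hX1 ψ₀⟩
    obtain ⟨a, ha⟩ : ∃ a : Y ⟶ X, φ ≫ a = ψ₀ := by
      have h2 : ψ₀ ∈ (cyc φ).carrier X := by rw [hcycφ]; exact hψ₀M
      exact h2
    obtain ⟨b, hb'⟩ : ∃ b : X ⟶ Y, ψ₀ ≫ b = φ := by
      have hφM : φ ∈ M.carrier Y := by rw [← hcycφ]; exact self_mem_cyc φ
      have h2 : φ ∈ (cyc ψ₀).carrier Y := by rw [hcycψ]; exact hφM
      exact h2
    have hab : φ ≫ (a ≫ b) = φ := by rw [← Category.assoc, ha, hb']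
    haveI := hlocY
    set ab : End Y := a ≫ b with hab2
    by_cases hunit : IsUnit ab
    · obtain ⟨u, hu2⟩ := hunit
      have hinv : a ≫ (b ≫ (↑u⁻¹ : End Y)) = 𝟙 Y := by
        have h4 : (↑u⁻¹ : End Y) * ab = 1 := by rw [← hu2]; exact u.inv_mul
        rw [End.mul_def] at h4
        calc a ≫ (b ≫ (↑u⁻¹ : End Y)) = ab ≫ (↑u⁻¹ : End Y) := by
              rw [hab2]; simp only [Category.assoc]
        _ = 𝟙 Y := h4.trans End.one_def
      have hYne : 𝟙 Y ≠ 0 := fun h => hYind.1 ((IsZero.iff_id_eq_zero Y).mpr h)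
      exact hYX (iso_of_retract hlocX hYne a (b ≫ (↑u⁻¹ : End Y)) hinv)
    · have hunit2 : IsUnit (1 - ab) := by
        rcases IsLocalRing.isUnit_or_isUnit_of_add_one (a := ab) (b := 1 - ab) (by abel)
          with h | h
        · exact absurd h hunit
        · exact h
      obtain ⟨u, hu2⟩ := hunit2
      have h4 : (↑u⁻¹ : End Y) * (1 - ab) = 1 := by rw [← hu2]; exact u.inv_mul
      rw [End.mul_def] at h4
      have hz : φ ≫ ((1 - ab : End Y)) = 0 := by
        have h5 : φ ≫ ((1 - ab : End Y)) = φ ≫ (1 : End Y) - φ ≫ ab :=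
          Preadditive.comp_sub _ _ _
        have h6 : φ ≫ (1 : End Y) = φ := Category.comp_id φ
        have h7 : φ ≫ ab = φ := by rw [hab2]; exact hab
        rw [h5, h6, h7, sub_self]
      apply hφ0
      calc φ = φ ≫ 𝟙 Y := by simp
      _ = φ ≫ ((1 - ab : End Y) ≫ (↑u⁻¹ : End Y)) := by rw [h4.trans End.one_def]
      _ = (φ ≫ (1 - ab : End Y)) ≫ (↑u⁻¹ : End Y) := by rw [Category.assoc]
      _ = 0 := by rw [hz, Limits.zero_comp]
  · rintro ⟨X, hXind, hX1, hsimp, hvan⟩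
    have hlocX := hKS.local_end X hXind
    obtain ⟨ψ₀, hψ₀⟩ : ∃ ψ₀ : 𝟙_ C ⟶ X, ψ₀ ≠ 0 := by
      have hbt : (⊥ : Submodule (End X) (𝟙_ C ⟶ X)) ≠ ⊤ := hsimp.bot_ne_top
      by_contra hcc
      push_neg at hcc
      apply hbt
      ext x
      simp [hcc x]
    have hMXb : (ofSubmodule X ⊤) ≠ Submod.zero (𝟙_ C) := (Submod.ne_zero_iff _).mpr
      ⟨X, ψ₀, (ofSubmodule_carrier_self X ⊤ ψ₀).mpr Submodule.mem_top, hψ₀⟩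
    have hMXt : (ofSubmodule X ⊤) ≠ Submod.full (𝟙_ C) :=
      ofSubmodule_ne_full hK hlocX hX1 ⊤
    refine ⟨ofSubmodule X ⊤, ⟨hMXb, hMXt⟩, ?_⟩
    rintro M ⟨hb, ht⟩
    obtain ⟨V, hVind, ψ, hψM, hψ0⟩ := hcomp M hb
    have hV1 : ¬ Nonempty (V ≅ 𝟙_ C) := fun ⟨e⟩ =>
      hψ0 (Submod.unit_component_zero hK ht e hψM)
    have hVX : Nonempty (V ≅ X) := by
      by_contra hc
      exact hψ0 (hvan V hVind hV1 hc ψ)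
    obtain ⟨w⟩ := hVX
    have hψ2 : ψ ≫ w.hom ∈ M.carrier X := M.map_mem _ hψM
    have hψ2ne : ψ ≫ w.hom ≠ 0 := by
      intro h
      apply hψ0
      calc ψ = (ψ ≫ w.hom) ≫ w.inv := by simp
      _ = 0 := by rw [h, Limits.zero_comp]
    have hMfull : ∀ χ : 𝟙_ C ⟶ X, χ ∈ M.carrier X := by
      intro χ
      have hNb : toSubmodule M X ≠ ⊥ := by
        intro h
        apply hψ2ne
        have h2 : ψ ≫ w.hom ∈ toSubmodule M X := hψ2
        rw [h] at h2
        simpa using h2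
      rcases hsimp.eq_bot_or_eq_top (toSubmodule M X) with h | h
      · exact absurd h hNb
      · have h2 : χ ∈ toSubmodule M X := by rw [h]; trivial
        exact h2
    refine Submod.ext' (funext fun W => le_antisymm ?_ ?_)
    · -- M ≤ ofSubmodule X ⊤
      intro φ hφ
      obtain ⟨n, f, p, s, hind, htot⟩ := decomp_sum hKS W
      have hφsum : φ = ∑ j, (φ ≫ p j) ≫ s j := by
        calc φ = φ ≫ 𝟙 W := by simp
        _ = φ ≫ ∑ j, p j ≫ s j := by rw [htot]
        _ = ∑ j, (φ ≫ p j) ≫ s j := by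
            rw [Preadditive.comp_sum]
            exact Finset.sum_congr rfl fun j _ => (Category.assoc _ _ _).symm
      rw [hφsum]
      refine AddSubgroup.sum_mem _ fun j _ => ?_
      have hj : φ ≫ p j ∈ M.carrier (f j) := M.map_mem _ hφ
      by_cases h1 : Nonempty (f j ≅ 𝟙_ C)
      · obtain ⟨e⟩ := h1
        rw [Submod.unit_component_zero hK ht e hj, Limits.zero_comp]
        exact AddSubgroup.zero_mem _
      · by_cases h2 : Nonempty (f j ≅ X)
        · obtain ⟨v⟩ := h2
          have h3 : (φ ≫ p j) ≫ s j = ((φ ≫ p j) ≫ v.hom) ≫ (v.inv ≫ s j) := by simp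
          rw [h3]
          exact AddSubgroup.subset_closure
            ⟨(φ ≫ p j) ≫ v.hom, Submodule.mem_top, v.inv ≫ s j, rfl⟩
        · rw [hvan (f j) (hind j) h1 h2 (φ ≫ p j), Limits.zero_comp]
          exact AddSubgroup.zero_mem _
    · -- ofSubmodule X ⊤ ≤ M
      refine (AddSubgroup.closure_le _).mpr ?_
      rintro x ⟨ψ', _, h', rfl⟩
      exact M.map_mem h' (hMfull ψ')

end ProofB



section Statement

variable (C : Type u) [Category.{v} C] [Preadditive C] [MonoidalCategory C]
  [MonoidalPreadditive C] [HasFiniteBiproducts C]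

/-- **Corollary.** Let `C` be right rigid, Krull-Schmidt, with `C(𝟙,𝟙)` a field.
The following are equivalent:
(i) `C` has precisely one tensor ideal other than the zero ideal and all of `C`;
(ii) there is an indecomposable `X ≇ 𝟙` such that `C(𝟙,X)` is a (nonzero) simple left
`C(X,X)`-module and `C(𝟙,Y) = 0` for every indecomposable `Y` not isomorphic to `𝟙` or `X`. -/
theorem unique_proper_tensorIdeal_iff
    (hrigid : ∀ X : C, Nonempty (RightDual X)) (hKS : IsKrullSchmidt C)
    (hK : IsField (End (𝟙_ C))) :
    (∃! J : TensorIdeal C, J ≠ TensorIdeal.bot C ∧ J ≠ TensorIdeal.top C) ↔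
      (∃ X : C, Indecomposable X ∧ ¬ Nonempty (X ≅ 𝟙_ C) ∧
        IsSimpleModule (End X) (𝟙_ C ⟶ X) ∧
        ∀ Y : C, Indecomposable Y → ¬ Nonempty (Y ≅ 𝟙_ C) → ¬ Nonempty (Y ≅ X) →
          ∀ φ : 𝟙_ C ⟶ Y, φ = 0) := by
  rw [unique_tensorIdeal_iff_unique_submod hrigid]
  exact unique_submod_iff hKS hK

end Statement

end TIP
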